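/- Fix a positive integer t ≥ 1. Then C(n, t, 3, 1)/n² tends to 1/(6(t+1)) as n → ∞; that is, the sequence n ↦ C(n, t, 3, 1)/n² converges to 1/(6(t+1)). -/

import Mathlib

open Finset


lemma pair_mem_sub {α : Type*} [DecidableEq α] {x y : α} {B : Finset α}
    (hx : x ∈ B) (hy : y ∈ B) : ({x, y} : Finset α) ⊆ B :=
  Finset.insert_subset hx (Finset.singleton_subset_iff.mpr hy)

lemma pair_image_card {α : Type*} [DecidableEq α] (x : α) (s : Finset α) (hx : x ∉ s) :
    (s.image fun y => ({x, y} : Finset α)).card = s.card := by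
  rw [Finset.card_image_of_injOn]
  intro a ha b hb hab
  have heq2 : ({x, a} : Finset α) = {x, b} := hab
  have hax : a ≠ x := fun h => hx (h ▸ ha)
  have : a ∈ ({x, b} : Finset α) := heq2 ▸ Finset.mem_insert_of_mem (Finset.mem_singleton_self a)
  rcases Finset.mem_insert.mp this with h | h
  · exact absurd h hax
  · exact Finset.mem_singleton.mp h

/-- In a triangle `B` of the graph `E`, the two pairs at a vertex `x` are edges. -/
lemma two_inner_pairs {α : Type*} [DecidableEq α] {E : Finset (Finset α)} {B : Finset α}
    (hB3 : B.card = 3) (hBp : ∀ p ⊆ B, p.card = 2 → p ∈ E) {x : α} (hxB : x ∈ B) :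
    (B.erase x).image (fun y => ({x, y} : Finset α)) ⊆ E.filter (fun e => x ∈ e) ∧
    ((B.erase x).image (fun y => ({x, y} : Finset α))).card = 2 := by
  constructor
  · intro p hp
    obtain ⟨y, hy, rfl⟩ := Finset.mem_image.mp hp
    refine Finset.mem_filter.mpr ⟨hBp _ (pair_mem_sub hxB (Finset.mem_of_mem_erase hy))
      (Finset.card_pair (fun h => (Finset.mem_erase.mp hy).1 h.symm)), Finset.mem_insert_self _ _⟩
  · rw [pair_image_card x _ (Finset.notMem_erase x B), Finset.card_erase_of_mem hxB, hB3]

/-- Triangle cover lemma: a graph with `p` edges has a set of at most `p/3`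
vertices meeting every triangle. -/
lemma triangle_cover {α : Type*} [DecidableEq α] :
    ∀ (N : ℕ) (E : Finset (Finset α)), E.card ≤ N → (∀ e ∈ E, e.card = 2) →
    ∃ D : Finset α, 3 * D.card ≤ E.card ∧
      ∀ B : Finset α, B.card = 3 → (∀ p ⊆ B, p.card = 2 → p ∈ E) →
        ∃ x ∈ D, x ∈ B := by
  intro N
  induction N with
  | zero =>
    intro E hEN h2
    refine ⟨∅, by simp, ?_⟩
    intro B hB3 hBp
    exfalso
    obtain ⟨x, hx⟩ := Finset.card_pos.mp (by omega : 0 < B.card)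
    obtain ⟨hmap, hc2⟩ := two_inner_pairs hB3 hBp hx
    have h1 : (E.filter (fun e => x ∈ e)).card = 0 := by
      have : (E.filter (fun e => x ∈ e)).card ≤ E.card := Finset.card_filter_le _ _
      omega
    have := Finset.card_le_card hmap
    omega
  | succ N ih =>
    intro E hEN h2
    by_cases htr : ∃ B : Finset α, B.card = 3 ∧ (∀ p ⊆ B, p.card = 2 → p ∈ E)
    · obtain ⟨B, hB3, hBp⟩ := htr
      have hBne : B.Nonempty := Finset.card_pos.mp (by omega)
      obtain ⟨v, hvB, hvmax⟩ := Finset.exists_max_image B (fun x => (E.filter (fun e => x ∈ e)).card) hBne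
      by_cases hdeg : 3 ≤ (E.filter (fun e => v ∈ e)).card
      · -- delete v
        set E' := E.filter (fun e => v ∉ e) with hE'
        have hcards : E'.card + (E.filter (fun e => v ∈ e)).card = E.card := by
          rw [hE']
          have := Finset.card_filter_add_card_filter_not (s := E) (p := fun e => v ∈ e)
          omega
        obtain ⟨D, hD1, hD2⟩ := ih E' (by omega) (fun e he => h2 e (Finset.mem_filter.mp he).1)
        refine ⟨insert v D, ?_, ?_⟩
        · have : (insert v D).card ≤ D.card + 1 := Finset.card_insert_le _ _
          omega
        · intro B' hB'3 hB'p
          by_cases hvB' : v ∈ B'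
          · exact ⟨v, Finset.mem_insert_self _ _, hvB'⟩
          · obtain ⟨x, hxD, hxB'⟩ := hD2 B' hB'3 (fun p hp hp2 =>
              Finset.mem_filter.mpr ⟨hB'p p hp hp2, fun hv => hvB' (hp hv)⟩)
            exact ⟨x, Finset.mem_insert_of_mem hxD, hxB'⟩
      · -- all degrees in B are ≤ 2, hence exactly the two inner pairs;
        -- every edge meeting B is contained in B
        have hinner : ∀ e ∈ E, ∀ x ∈ B, x ∈ e → e ⊆ B := by
          intro e he x hxB hxe
          obtain ⟨hmap, hc2⟩ := two_inner_pairs hB3 hBp hxB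
          have hxd := hvmax x hxB
          have hdeg2 : (E.filter (fun e => x ∈ e)).card = 2 := by
            have := Finset.card_le_card hmap
            omega
          have heq : (B.erase x).image (fun y => ({x, y} : Finset α)) = E.filter (fun e => x ∈ e) :=
            Finset.eq_of_subset_of_card_le hmap (by omega)
          have : e ∈ (B.erase x).image (fun y => ({x, y} : Finset α)) := by
            rw [heq]; exact Finset.mem_filter.mpr ⟨he, hxe⟩
          obtain ⟨y, hy, rfl⟩ := Finset.mem_image.mp this
          exact pair_mem_sub hxB (Finset.mem_of_mem_erase hy)
        -- remove B's inner pairs from E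
        set E' := E.filter (fun e => ¬ e ⊆ B) with hE'
        have hin3 : 3 ≤ (E.filter (fun e => e ⊆ B)).card := by
          have hsub : B.powersetCard 2 ⊆ E.filter (fun e => e ⊆ B) := by
            intro p hp
            obtain ⟨hps, hpc⟩ := Finset.mem_powersetCard.mp hp
            exact Finset.mem_filter.mpr ⟨hBp p hps hpc, hps⟩
          have h3 : (B.powersetCard 2).card = 3 := by
            rw [Finset.card_powersetCard, hB3]; decide
          have := Finset.card_le_card hsub
          omega
        have hcards : E'.card + (E.filter (fun e => e ⊆ B)).card = E.card := by
          rw [hE']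
          have := Finset.card_filter_add_card_filter_not (s := E) (p := fun e => e ⊆ B)
          omega
        obtain ⟨D, hD1, hD2⟩ := ih E' (by omega) (fun e he => h2 e (Finset.mem_filter.mp he).1)
        obtain ⟨v0, hv0⟩ := hBne
        refine ⟨insert v0 D, ?_, ?_⟩
        · have : (insert v0 D).card ≤ D.card + 1 := Finset.card_insert_le _ _
          omega
        · intro B' hB'3 hB'p
          by_cases hint : ∃ x ∈ B', x ∈ B
          · obtain ⟨x, hxB', hxB⟩ := hint
            have hB'B : B' = B := by
              apply Finset.eq_of_subset_of_card_le _ (by omega)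
              intro z hz
              by_cases hzx : z = x
              · exact hzx ▸ hxB
              · have hpz : ({z, x} : Finset α) ∈ E := hB'p _
                  (pair_mem_sub hz hxB') (Finset.card_pair hzx)
                have := hinner _ hpz x hxB (Finset.mem_insert_of_mem (Finset.mem_singleton_self x))
                exact this (Finset.mem_insert_self _ _)
            exact ⟨v0, Finset.mem_insert_self _ _, hB'B ▸ hv0⟩
          · push_neg at hint
            obtain ⟨x, hxD, hxB'⟩ := hD2 B' hB'3 (fun p hp hp2 => by
              refine Finset.mem_filter.mpr ⟨hB'p p hp hp2, ?_⟩
              intro hpB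
              obtain ⟨z, hz⟩ : p.Nonempty := Finset.card_pos.mp (by omega)
              exact hint z (hp hz) (hpB hz))
            exact ⟨x, Finset.mem_insert_of_mem hxD, hxB'⟩
    · exact ⟨∅, by simp, fun B hB3 hBp => absurd ⟨B, hB3, hBp⟩ htr⟩

/-- Set-theoretic representation of an `(n,t,w,e)`-LPECC code of size `b`:
a ground set `X` with `|X| = n` together with pairwise disjoint families
`P i` of subsets (blocks) of `X` satisfying Properties A(t), B(w), C(e). -/
def IsLPECC {α : Type*} [DecidableEq α] (n t w e : ℕ) (X : Finset α)
    {b : ℕ} (P : Fin b → Finset (Finset α)) : Prop :=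
  X.card = n ∧
  (∀ i, ∀ B ∈ P i, B ⊆ X) ∧
  (∀ i j : Fin b, i ≠ j → Disjoint (P i) (P j)) ∧
  (∀ T ⊆ X, T.card = t → ∀ i, ∃ B ∈ P i, Disjoint B T) ∧
  (∀ i, ∀ B ∈ P i, B.card ≤ w) ∧
  (∀ i j : Fin b, i ≠ j → ∀ B ∈ P i, ∀ B' ∈ P j, 2 * e + 1 ≤ (symmDiff B B').card)

/-- `Cmax n t w e` is the maximum size of an `(n,t,w,e)`-LPECC code. -/
noncomputable def Cmax (n t w e : ℕ) : ℕ :=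
  sSup {b : ℕ | ∃ P : Fin b → Finset (Finset (Fin n)),
    IsLPECC n t w e Finset.univ P}

lemma code_upper {n t b : ℕ} (htn : t ≤ n) (P : Fin b → Finset (Finset (Fin n)))
    (h : IsLPECC n t 3 1 Finset.univ P) :
    6 * (t + 1) * b ≤ n * n + 6 * n + 6 * (t + 1) := by
  obtain ⟨hX, hsub, hdisj, hA, hB, hC⟩ := h
  classical
  -- pair families and small-block vertex sets
  set Q : Fin b → Finset (Finset (Fin n)) :=
    fun i => ((univ : Finset (Fin n)).powersetCard 2).filter
      (fun p => ∃ B ∈ P i, p ⊆ B) with hQ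
  set V : Fin b → Finset (Fin n) :=
    fun i => univ.filter (fun x => ∃ B ∈ P i, x ∈ B ∧ B.card ≤ 2) with hV
  -- pair families pairwise disjoint
  have hQdisj : ∀ i j : Fin b, i ≠ j → Disjoint (Q i) (Q j) := by
    intro i j hij
    rw [Finset.disjoint_left]
    intro p hpi hpj
    obtain ⟨hp2, Bi, hBi, hpBi⟩ := Finset.mem_filter.mp hpi
    obtain ⟨-, Bj, hBj, hpBj⟩ := Finset.mem_filter.mp hpj
    have hp2' : p.card = 2 := (Finset.mem_powersetCard.mp hp2).2
    have h3 := hC i j hij Bi hBi Bj hBj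
    have hss : symmDiff Bi Bj ⊆ (Bi \ p) ∪ (Bj \ p) := by
      rw [symmDiff_eq_sup_sdiff_inf]
      intro x hx
      simp only [Finset.sup_eq_union, Finset.inf_eq_inter] at hx
      rw [Finset.mem_sdiff] at hx
      rcases Finset.mem_union.mp hx.1 with h | h
      · exact Finset.mem_union_left _ (Finset.mem_sdiff.mpr ⟨h, fun hxp => hx.2 (Finset.mem_inter.mpr ⟨h, hpBj hxp⟩)⟩)
      · exact Finset.mem_union_right _ (Finset.mem_sdiff.mpr ⟨h, fun hxp => hx.2 (Finset.mem_inter.mpr ⟨hpBi hxp, h⟩)⟩)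
    have hcard := Finset.card_le_card hss
    have h1 : (Bi \ p).card = Bi.card - 2 := by rw [Finset.card_sdiff_of_subset hpBi, hp2']
    have h2 : (Bj \ p).card = Bj.card - 2 := by rw [Finset.card_sdiff_of_subset hpBj, hp2']
    have := Finset.card_union_le (Bi \ p) (Bj \ p)
    have hi3 := hB i Bi hBi
    have hj3 := hB j Bj hBj
    omega
  -- small-block vertex sets pairwise disjoint
  have hVdisj : ∀ i j : Fin b, i ≠ j → Disjoint (V i) (V j) := by
    intro i j hij
    rw [Finset.disjoint_left]
    intro x hxi hxj
    obtain ⟨-, Bi, hBi, hxBi, hBi2⟩ := Finset.mem_filter.mp hxi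
    obtain ⟨-, Bj, hBj, hxBj, hBj2⟩ := Finset.mem_filter.mp hxj
    have h3 := hC i j hij Bi hBi Bj hBj
    have hss : symmDiff Bi Bj ⊆ (Bi.erase x) ∪ (Bj.erase x) := by
      rw [symmDiff_eq_sup_sdiff_inf]
      intro y hy
      simp only [Finset.sup_eq_union, Finset.inf_eq_inter] at hy
      rw [Finset.mem_sdiff] at hy
      have hyx : y ≠ x := fun h => hy.2 (h ▸ Finset.mem_inter.mpr ⟨hxBi, hxBj⟩)
      rcases Finset.mem_union.mp hy.1 with h | h
      · exact Finset.mem_union_left _ (Finset.mem_erase.mpr ⟨hyx, h⟩)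
      · exact Finset.mem_union_right _ (Finset.mem_erase.mpr ⟨hyx, h⟩)
    have hcard := Finset.card_le_card hss
    have := Finset.card_union_le (Bi.erase x) (Bj.erase x)
    have h1 : (Bi.erase x).card = Bi.card - 1 := Finset.card_erase_of_mem hxBi
    have h2 : (Bj.erase x).card = Bj.card - 1 := Finset.card_erase_of_mem hxBj
    omega
  -- per-family bound
  have hfam : ∀ i : Fin b, ∅ ∉ P i → 3 * (t + 1) ≤ 3 * (V i).card + (Q i).card := by
    intro i hne
    obtain ⟨D, hD1, hD2⟩ := triangle_cover (Q i).card (Q i) le_rfl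
      (fun e he => ((Finset.mem_powersetCard.mp (Finset.mem_filter.mp he).1).2))
    by_contra hlt
    push_neg at hlt
    have hCcard : ((V i) ∪ D).card ≤ t := by
      have := Finset.card_union_le (V i) D
      omega
    obtain ⟨T, hTsub, hTcard⟩ := Finset.exists_superset_card_eq hCcard
      (by rw [Fintype.card_fin]; exact htn)
    obtain ⟨B0, hB0, hB0T⟩ := hA T (Finset.subset_univ T) hTcard i
    have hB0ne : B0.Nonempty := Finset.nonempty_iff_ne_empty.mpr (fun h => hne (h ▸ hB0))
    have hB03 := hB i B0 hB0
    have hmeet : ∃ x ∈ (V i) ∪ D, x ∈ B0 := by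
      by_cases hsmall : B0.card ≤ 2
      · obtain ⟨x, hx⟩ := hB0ne
        exact ⟨x, Finset.mem_union_left _ (Finset.mem_filter.mpr
          ⟨Finset.mem_univ x, B0, hB0, hx, hsmall⟩), hx⟩
      · have hB03' : B0.card = 3 := by omega
        obtain ⟨x, hxD, hxB0⟩ := hD2 B0 hB03' (fun p hp hp2 =>
          Finset.mem_filter.mpr ⟨Finset.mem_powersetCard.mpr ⟨Finset.subset_univ p, hp2⟩,
            B0, hB0, hp⟩)
        exact ⟨x, Finset.mem_union_right _ hxD, hxB0⟩
    obtain ⟨x, hxC, hxB0⟩ := hmeet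
    exact (Finset.disjoint_left.mp hB0T hxB0) (hTsub hxC)
  -- at most one family contains ∅
  set S : Finset (Fin b) := univ.filter (fun i : Fin b => ¬ ∅ ∈ P i) with hS
  have hScard : b ≤ S.card + 1 := by
    have h1 : (univ.filter (fun i : Fin b => ∅ ∈ P i)).card ≤ 1 := by
      rw [Finset.card_le_one]
      intro i hi j hj
      by_contra hij
      have := hC i j hij ∅ (Finset.mem_filter.mp hi).2 ∅ (Finset.mem_filter.mp hj).2
      simp [symmDiff_self] at this
    have hsub2 : (univ : Finset (Fin b)) ⊆ S ∪ univ.filter (fun i => ∅ ∈ P i) := by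
      intro i _
      by_cases h : ∅ ∈ P i
      · exact Finset.mem_union_right _ (Finset.mem_filter.mpr ⟨Finset.mem_univ _, h⟩)
      · exact Finset.mem_union_left _ (Finset.mem_filter.mpr ⟨Finset.mem_univ _, h⟩)
    have h2 := Finset.card_le_card hsub2
    have h4 := Finset.card_union_le S (univ.filter (fun i : Fin b => ∅ ∈ P i))
    have h3 : (univ : Finset (Fin b)).card = b := by simp
    omega
  -- sum the per-family bounds
  have hsumV : ∑ i : Fin b, (V i).card ≤ n := by
    rw [← Finset.card_biUnion (fun i _ j _ hij => hVdisj i j hij)]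
    calc ((univ : Finset (Fin b)).biUnion V).card ≤ (univ : Finset (Fin n)).card :=
          Finset.card_le_card (Finset.subset_univ _)
      _ = n := by simp
  have hsumQ : 2 * ∑ i : Fin b, (Q i).card ≤ n * n := by
    have h1 : ∑ i : Fin b, (Q i).card ≤ ((univ : Finset (Fin n)).powersetCard 2).card := by
      rw [← Finset.card_biUnion (fun i _ j _ hij => hQdisj i j hij)]
      apply Finset.card_le_card
      intro p hp
      obtain ⟨i, -, hpi⟩ := Finset.mem_biUnion.mp hp
      exact (Finset.mem_filter.mp hpi).1
    have h2 : ((univ : Finset (Fin n)).powersetCard 2).card = n.choose 2 := by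
      rw [Finset.card_powersetCard]; simp
    have h3 : n.choose 2 = n * (n - 1) / 2 := Nat.choose_two_right n
    have h4 : n * (n - 1) / 2 * 2 ≤ n * (n - 1) := Nat.div_mul_le_self _ _
    have h5 : n * (n - 1) ≤ n * n := Nat.mul_le_mul_left n (by omega)
    omega
  have hsumS : 3 * (t + 1) * S.card ≤ ∑ i ∈ S, (3 * (V i).card + (Q i).card) := by
    calc 3 * (t + 1) * S.card = ∑ _i ∈ S, 3 * (t + 1) := by
          rw [Finset.sum_const, smul_eq_mul, mul_comm]
      _ ≤ _ := Finset.sum_le_sum (fun i hi => hfam i (Finset.mem_filter.mp hi).2)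
  have hsplit : ∑ i ∈ S, (3 * (V i).card + (Q i).card) ≤
      3 * (∑ i : Fin b, (V i).card) + ∑ i : Fin b, (Q i).card := by
    calc ∑ i ∈ S, (3 * (V i).card + (Q i).card)
        ≤ ∑ i : Fin b, (3 * (V i).card + (Q i).card) :=
          Finset.sum_le_sum_of_subset (Finset.subset_univ S)
      _ = _ := by rw [Finset.sum_add_distrib, Finset.mul_sum]
  calc 6 * (t + 1) * b ≤ 6 * (t + 1) * (S.card + 1) := Nat.mul_le_mul_left _ hScard
    _ = 2 * (3 * (t + 1) * S.card) + 6 * (t + 1) := by ring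
    _ ≤ 2 * (∑ i ∈ S, (3 * (V i).card + (Q i).card)) + 6 * (t + 1) :=
        Nat.add_le_add_right (Nat.mul_le_mul_left 2 hsumS) _
    _ ≤ 2 * (3 * (∑ i : Fin b, (V i).card) + ∑ i : Fin b, (Q i).card) + 6 * (t + 1) :=
        Nat.add_le_add_right (Nat.mul_le_mul_left 2 hsplit) _
    _ = 6 * (∑ i : Fin b, (V i).card) + 2 * (∑ i : Fin b, (Q i).card) + 6 * (t + 1) := by ring
    _ ≤ n * n + 6 * n + 6 * (t + 1) := by omega

/-- Greedy extraction of groups of `t+1` pairwise disjoint blocks. -/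
lemma greedy {α : Type*} [DecidableEq α] (t D : ℕ) :
    ∀ (N : ℕ) (𝒯 : Finset (Finset α)), 𝒯.card ≤ N →
    (∀ x : α, (𝒯.filter (fun B => x ∈ B)).card ≤ D) →
    (∀ B ∈ 𝒯, B.card = 3) →
    ∃ (k : ℕ) (G : Fin k → Finset (Finset α)),
      (∀ i, G i ⊆ 𝒯) ∧ (∀ i, (G i).card = t + 1) ∧
      (∀ i, ∀ B ∈ G i, ∀ B' ∈ G i, B ≠ B' → Disjoint B B') ∧
      (∀ i j, i ≠ j → Disjoint (G i) (G j)) ∧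
      𝒯.card ≤ (t + 1) * k + 3 * t * D := by
  intro N
  induction N with
  | zero =>
    intro 𝒯 hc hdeg h3card
    exact ⟨0, fun i => i.elim0, fun i => i.elim0, fun i => i.elim0, fun i => i.elim0,
      fun i => i.elim0, by omega⟩
  | succ N ih =>
    intro 𝒯 hc hdeg h3card
    by_cases hM : ∃ M ⊆ 𝒯, M.card = t + 1 ∧ ∀ B ∈ M, ∀ B' ∈ M, B ≠ B' → Disjoint B B'
    · obtain ⟨M, hMsub, hMcard, hMdisj⟩ := hM
      set 𝒯' := 𝒯 \ M with h𝒯'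
      have hcard' : 𝒯'.card + M.card = 𝒯.card := by
        rw [h𝒯', Finset.card_sdiff_add_card, Finset.union_eq_left.mpr hMsub]
      obtain ⟨k, G, hG1, hG2, hG3, hG4, hG5⟩ := ih 𝒯' (by omega)
        (fun x => le_trans (Finset.card_le_card (Finset.filter_subset_filter _
          (Finset.sdiff_subset))) (hdeg x))
        (fun B hB => h3card B (Finset.mem_sdiff.mp hB).1)
      refine ⟨k + 1, Fin.cons M G, ?_, ?_, ?_, ?_, ?_⟩
      · intro i
        induction i using Fin.cases with
        | zero => simpa using hMsub
        | succ i => simpa using le_trans (hG1 i) (Finset.sdiff_subset)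
      · intro i
        induction i using Fin.cases with
        | zero => simpa using hMcard
        | succ i => simpa using hG2 i
      · intro i
        induction i using Fin.cases with
        | zero => simpa using hMdisj
        | succ i => simpa using hG3 i
      · intro i j hij
        induction i using Fin.cases with
        | zero =>
          induction j using Fin.cases with
          | zero => exact absurd rfl hij
          | succ j =>
            simp only [Fin.cons_zero, Fin.cons_succ]
            rw [Finset.disjoint_left]
            intro B hBM hBG
            exact (Finset.mem_sdiff.mp (hG1 j hBG)).2 hBM
        | succ i =>
          induction j using Fin.cases with
          | zero =>
            simp only [Fin.cons_zero, Fin.cons_succ]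
            rw [Finset.disjoint_right]
            intro B hBM hBG
            exact (Finset.mem_sdiff.mp (hG1 i hBG)).2 hBM
          | succ j =>
            simp only [Fin.cons_succ]
            exact hG4 i j (fun h => hij (by rw [h]))
      · have : (t + 1) * (k + 1) = (t + 1) * k + (t + 1) := by ring
        omega
    · -- no (t+1)-matching: 𝒯 is small
      refine ⟨0, fun i => i.elim0, fun i => i.elim0, fun i => i.elim0, fun i => i.elim0,
        fun i => i.elim0, ?_⟩
      -- take a maximum pairwise-disjoint subfamily M
      set 𝒜 := 𝒯.powerset.filter (fun M => ∀ B ∈ M, ∀ B' ∈ M, B ≠ B' → Disjoint B B') with h𝒜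
      have h𝒜ne : 𝒜.Nonempty := ⟨∅, Finset.mem_filter.mpr ⟨Finset.empty_mem_powerset _, by simp⟩⟩
      obtain ⟨M, hM𝒜, hMmax⟩ := Finset.exists_max_image 𝒜 Finset.card h𝒜ne
      obtain ⟨hMsub, hMdisj⟩ := Finset.mem_filter.mp hM𝒜
      rw [Finset.mem_powerset] at hMsub
      have hMle : M.card ≤ t := by
        by_contra hgt
        push_neg at hgt
        obtain ⟨M', hM'sub, hM'card⟩ := Finset.exists_subset_card_eq
          (show t + 1 ≤ M.card by omega)
        exact hM ⟨M', le_trans hM'sub hMsub, hM'card,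
          fun B hB B' hB' => hMdisj B (hM'sub hB) B' (hM'sub hB')⟩
      -- every member of 𝒯 meets some member of M
      have hmeet : ∀ B ∈ 𝒯, ∃ C ∈ M, ∃ x ∈ C, x ∈ B := by
        intro B hB
        by_cases hBM : B ∈ M
        · obtain ⟨x, hx⟩ := Finset.card_pos.mp (by rw [h3card B hB]; omega)
          exact ⟨B, hBM, x, hx, hx⟩
        · by_contra hcon
          push_neg at hcon
          have hdisjall : ∀ C ∈ M, Disjoint B C := by
            intro C hC
            rw [Finset.disjoint_right]
            intro x hxC hxB
            exact hcon C hC x hxC hxB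
          have hmem : insert B M ∈ 𝒜 := by
            refine Finset.mem_filter.mpr ⟨Finset.mem_powerset.mpr
              (Finset.insert_subset hB hMsub), ?_⟩
            intro B1 hB1 B2 hB2 h12
            rcases Finset.mem_insert.mp hB1 with h1 | h1
            · rcases Finset.mem_insert.mp hB2 with h2 | h2
              · exact absurd (h1.trans h2.symm) h12
              · rw [h1]; exact hdisjall B2 h2
            · rcases Finset.mem_insert.mp hB2 with h2 | h2
              · rw [h2]; exact (hdisjall B1 h1).symm
              · exact hMdisj B1 h1 B2 h2 h12
          have := hMmax _ hmem
          rw [Finset.card_insert_of_notMem hBM] at this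
          omega
      have hcover : 𝒯 ⊆ M.biUnion (fun C => C.biUnion (fun x => 𝒯.filter (fun B => x ∈ B))) := by
        intro B hB
        obtain ⟨C, hC, x, hxC, hxB⟩ := hmeet B hB
        exact Finset.mem_biUnion.mpr ⟨C, hC, Finset.mem_biUnion.mpr
          ⟨x, hxC, Finset.mem_filter.mpr ⟨hB, hxB⟩⟩⟩
      have hbound : 𝒯.card ≤ M.card * (3 * D) := by
        calc 𝒯.card ≤ (M.biUnion (fun C => C.biUnion (fun x => 𝒯.filter (fun B => x ∈ B)))).card :=
              Finset.card_le_card hcover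
          _ ≤ ∑ C ∈ M, (C.biUnion (fun x => 𝒯.filter (fun B => x ∈ B))).card :=
              Finset.card_biUnion_le
          _ ≤ ∑ C ∈ M, (3 * D) := by
              apply Finset.sum_le_sum
              intro C hC
              calc (C.biUnion (fun x => 𝒯.filter (fun B => x ∈ B))).card
                  ≤ ∑ x ∈ C, (𝒯.filter (fun B => x ∈ B)).card := Finset.card_biUnion_le
                _ ≤ ∑ x ∈ C, D := Finset.sum_le_sum (fun x _ => hdeg x)
                _ = C.card * D := by rw [Finset.sum_const, smul_eq_mul]
                _ ≤ 3 * D := by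
                    have := h3card C (hMsub hC)
                    apply Nat.mul_le_mul_right
                    omega
          _ = M.card * (3 * D) := by rw [Finset.sum_const, smul_eq_mul]
      calc 𝒯.card ≤ M.card * (3 * D) := hbound
        _ ≤ t * (3 * D) := Nat.mul_le_mul_right _ hMle
        _ = 3 * t * D := by ring
        _ ≤ (t + 1) * 0 + 3 * t * D := by simp

section ZeroSum
variable (n : ℕ) [NeZero n]
open Fin.CommRing

/-- The zero-sum triples in `Fin n`. -/
def zsT : Finset (Finset (Fin n)) :=
  ((univ : Finset (Fin n)).powersetCard 3).filter (fun B => ∑ x ∈ B, x = 0)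

lemma zsT_card3 : ∀ B ∈ zsT n, B.card = 3 :=
  fun B hB => (Finset.mem_powersetCard.mp (Finset.mem_filter.mp hB).1).2

lemma zsT_sum : ∀ B ∈ zsT n, ∑ x ∈ B, x = 0 :=
  fun B hB => (Finset.mem_filter.mp hB).2

/-- Writing a zero-sum triple containing `x, y` explicitly. -/
lemma zsT_eq {B : Finset (Fin n)} (hB : B ∈ zsT n) {x y : Fin n} (hx : x ∈ B) (hy : y ∈ B)
    (hxy : x ≠ y) : B = {x, y, -(x + y)} := by
  have h3 := zsT_card3 n B hB
  have hsum := zsT_sum n B hB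
  have hpair : ({x, y} : Finset (Fin n)) ⊆ B := pair_mem_sub hx hy
  have hcd : (B \ {x, y}).card = 1 := by
    rw [Finset.card_sdiff_of_subset hpair, h3, Finset.card_pair hxy]
  obtain ⟨z, hz⟩ := Finset.card_eq_one.mp hcd
  have hBeq : B = {x, y} ∪ {z} := by
    rw [← hz, Finset.union_sdiff_of_subset hpair]
  have hdisj : Disjoint ({x, y} : Finset (Fin n)) {z} := by
    rw [Finset.disjoint_right]
    intro a ha
    rw [Finset.mem_singleton] at ha
    subst ha
    intro hmem
    have : a ∈ B \ {x, y} := hz ▸ Finset.mem_singleton_self a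
    exact (Finset.mem_sdiff.mp this).2 hmem
  have hzval : z = -(x + y) := by
    have : ∑ w ∈ B, w = x + y + z := by
      rw [hBeq, Finset.sum_union hdisj, Finset.sum_pair hxy, Finset.sum_singleton]
    rw [this] at hsum
    linear_combination hsum
  rw [hBeq, hzval]
  ext a
  simp [Finset.mem_insert, Finset.mem_union, or_assoc]

lemma zsT_inter {B B' : Finset (Fin n)} (hB : B ∈ zsT n) (hB' : B' ∈ zsT n) (hne : B ≠ B') :
    (B ∩ B').card ≤ 1 := by
  by_contra h
  push_neg at h
  obtain ⟨x, hx⟩ := Finset.card_pos.mp (by omega : 0 < (B ∩ B').card)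
  obtain ⟨y, hy⟩ := Finset.card_pos.mp
    (by rw [Finset.card_erase_of_mem hx]; omega : 0 < ((B ∩ B').erase x).card)
  have hxy : x ≠ y := fun hxx => (Finset.mem_erase.mp hy).1 hxx.symm
  have hy' := Finset.mem_of_mem_erase hy
  have e1 := zsT_eq n hB (Finset.mem_inter.mp hx).1 (Finset.mem_inter.mp hy').1 hxy
  have e2 := zsT_eq n hB' (Finset.mem_inter.mp hx).2 (Finset.mem_inter.mp hy').2 hxy
  exact hne (e1.trans e2.symm)

lemma zsT_degree (x : Fin n) : ((zsT n).filter (fun B => x ∈ B)).card ≤ n := by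
  have hsub : (zsT n).filter (fun B => x ∈ B) ⊆
      (univ : Finset (Fin n)).image (fun b => ({x, b, -(x + b)} : Finset (Fin n))) := by
    intro B hB
    obtain ⟨hBz, hxB⟩ := Finset.mem_filter.mp hB
    obtain ⟨b, hb⟩ := Finset.card_pos.mp
      (by rw [Finset.card_erase_of_mem hxB, zsT_card3 n B hBz]; omega : 0 < (B.erase x).card)
    have := zsT_eq n hBz hxB (Finset.mem_of_mem_erase hb)
      (fun h => (Finset.mem_erase.mp hb).1 h.symm)
    exact Finset.mem_image.mpr ⟨b, Finset.mem_univ b, this.symm⟩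
  calc _ ≤ _ := Finset.card_le_card hsub
    _ ≤ (univ : Finset (Fin n)).card := Finset.card_image_le
    _ = n := by simp

lemma zsT_count : n * n ≤ 6 * (zsT n).card + 3 * n := by
  classical
  set s := ((univ : Finset (Fin n)) ×ˢ (univ : Finset (Fin n))).filter
    (fun p => p.1 ≠ p.2 ∧ -(p.1 + p.2) ≠ p.1 ∧ -(p.1 + p.2) ≠ p.2) with hs
  set f : Fin n × Fin n → Finset (Fin n) := fun p => {p.1, p.2, -(p.1 + p.2)} with hf
  -- image is inside zsT
  have himg : s.image f ⊆ zsT n := by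
    intro B hB
    obtain ⟨p, hp, rfl⟩ := Finset.mem_image.mp hB
    obtain ⟨-, h1, h2, h3⟩ := Finset.mem_filter.mp hp
    have hne1 : p.1 ∉ ({p.2, -(p.1 + p.2)} : Finset (Fin n)) := by
      simp only [Finset.mem_insert, Finset.mem_singleton]
      push_neg
      exact ⟨h1, fun h => h2 h.symm⟩
    have hne2 : p.2 ∉ ({-(p.1 + p.2)} : Finset (Fin n)) := by
      simp only [Finset.mem_singleton]
      exact fun h => h3 h.symm
    refine Finset.mem_filter.mpr ⟨Finset.mem_powersetCard.mpr ⟨Finset.subset_univ _, ?_⟩, ?_⟩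
    · rw [hf]
      rw [Finset.card_insert_of_notMem hne1,
        Finset.card_insert_of_notMem hne2, Finset.card_singleton]
    · rw [hf]
      rw [Finset.sum_insert hne1, Finset.sum_insert hne2, Finset.sum_singleton]
      ring
  -- fibers have size at most 6
  have hfib : ∀ B ∈ s.image f, (s.filter (fun p => f p = B)).card ≤ 6 := by
    intro B hBim
    have hB3 : B.card = 3 := zsT_card3 n B (himg hBim)
    have hsub : s.filter (fun p => f p = B) ⊆ (B ×ˢ B).filter (fun p => p.1 ≠ p.2) := by
      intro p hp
      obtain ⟨hps, hfp⟩ := Finset.mem_filter.mp hp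
      obtain ⟨-, h1, -, -⟩ := Finset.mem_filter.mp hps
      refine Finset.mem_filter.mpr ⟨Finset.mem_product.mpr ⟨?_, ?_⟩, h1⟩
      · rw [← hfp]; exact Finset.mem_insert_self _ _
      · rw [← hfp]; exact Finset.mem_insert_of_mem (Finset.mem_insert_self _ _)
    have hdiag : ((B ×ˢ B).filter (fun p => p.1 = p.2)).card = 3 := by
      have : (B ×ˢ B).filter (fun p => p.1 = p.2) = B.image (fun a => (a, a)) := by
        ext p
        simp only [Finset.mem_filter, Finset.mem_product, Finset.mem_image]
        constructor
        · rintro ⟨⟨h1, h2⟩, h3⟩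
          exact ⟨p.1, h1, Prod.ext rfl h3⟩
        · rintro ⟨a, ha, rfl⟩
          exact ⟨⟨ha, ha⟩, rfl⟩
      rw [this, Finset.card_image_of_injective _ (fun a b h => (Prod.mk.injEq _ _ _ _).mp h |>.1),
        hB3]
    have htot : ((B ×ˢ B).filter (fun p => p.1 ≠ p.2)).card +
        ((B ×ˢ B).filter (fun p => p.1 = p.2)).card ≤ 9 := by
      have hds : Disjoint ((B ×ˢ B).filter (fun p => p.1 ≠ p.2))
          ((B ×ˢ B).filter (fun p => p.1 = p.2)) := by
        rw [Finset.disjoint_left]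
        intro p h1 h2
        exact (Finset.mem_filter.mp h1).2 (Finset.mem_filter.mp h2).2
      have h2 : (B ×ˢ B).card = 9 := by rw [Finset.card_product, hB3]
      calc _ = (((B ×ˢ B).filter (fun p => p.1 ≠ p.2)) ∪
            ((B ×ˢ B).filter (fun p => p.1 = p.2))).card := (Finset.card_union_of_disjoint hds).symm
        _ ≤ (B ×ˢ B).card := Finset.card_le_card
            (Finset.union_subset (Finset.filter_subset _ _) (Finset.filter_subset _ _))
        _ = 9 := h2
    have := Finset.card_le_card hsub
    omega
  have hcount := Finset.card_le_mul_card_image s 6 hfib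
  -- s is large
  have hslarge : n * n ≤ s.card + 3 * n := by
    have hbad : ((univ ×ˢ univ : Finset (Fin n × Fin n)).filter
        (fun p => ¬(p.1 ≠ p.2 ∧ -(p.1 + p.2) ≠ p.1 ∧ -(p.1 + p.2) ≠ p.2))).card ≤ 3 * n := by
      have hsub : (univ ×ˢ univ : Finset (Fin n × Fin n)).filter
          (fun p => ¬(p.1 ≠ p.2 ∧ -(p.1 + p.2) ≠ p.1 ∧ -(p.1 + p.2) ≠ p.2)) ⊆
          ((univ : Finset (Fin n)).image (fun a => (a, a))) ∪
          ((univ : Finset (Fin n)).image (fun a => (a, -(2 * a)))) ∪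
          ((univ : Finset (Fin n)).image (fun a => (-(2 * a), a))) := by
        intro p hp
        obtain ⟨-, hcond⟩ := Finset.mem_filter.mp hp
        push_neg at hcond
        by_cases h1 : p.1 = p.2
        · exact Finset.mem_union_left _ (Finset.mem_union_left _
            (Finset.mem_image.mpr ⟨p.1, Finset.mem_univ _, Prod.ext rfl h1⟩))
        · by_cases h2 : -(p.1 + p.2) = p.1
          · refine Finset.mem_union_left _ (Finset.mem_union_right _
              (Finset.mem_image.mpr ⟨p.1, Finset.mem_univ _, ?_⟩))
            have h4 : p.2 = -(2 * p.1) := by linear_combination -h2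
            rw [← h4]
          · have h3 := hcond h1 h2
            refine Finset.mem_union_right _
              (Finset.mem_image.mpr ⟨p.2, Finset.mem_univ _, ?_⟩)
            have h4 : p.1 = -(2 * p.2) := by linear_combination -h3
            rw [← h4]
      calc _ ≤ _ := Finset.card_le_card hsub
        _ ≤ ((univ : Finset (Fin n)).image (fun a => (a, a)) ∪
            (univ : Finset (Fin n)).image (fun a => (a, -(2 * a)))).card +
            ((univ : Finset (Fin n)).image (fun a => (-(2 * a), a))).card :=
            Finset.card_union_le _ _
        _ ≤ (((univ : Finset (Fin n)).image (fun a => (a, a))).card +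
            ((univ : Finset (Fin n)).image (fun a => (a, -(2 * a)))).card) +
            ((univ : Finset (Fin n)).image (fun a => (-(2 * a), a))).card :=
            Nat.add_le_add_right (Finset.card_union_le _ _) _
        _ ≤ n + n + n := by
            have c1 : ((univ : Finset (Fin n)).image (fun a => (a, a))).card ≤ n := by
              calc _ ≤ (univ : Finset (Fin n)).card := Finset.card_image_le
                _ = n := by simp
            have c2 : ((univ : Finset (Fin n)).image (fun a => (a, -(2*a)))).card ≤ n := by
              calc _ ≤ (univ : Finset (Fin n)).card := Finset.card_image_le
                _ = n := by simp
            have c3 : ((univ : Finset (Fin n)).image (fun a => (-(2*a), a))).card ≤ n := by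
              calc _ ≤ (univ : Finset (Fin n)).card := Finset.card_image_le
                _ = n := by simp
            omega
        _ = 3 * n := by ring
    have htot := Finset.card_filter_add_card_filter_not
      (s := (univ ×ˢ univ : Finset (Fin n × Fin n)))
      (p := fun p => p.1 ≠ p.2 ∧ -(p.1 + p.2) ≠ p.1 ∧ -(p.1 + p.2) ≠ p.2)
    have huniv : (univ ×ˢ univ : Finset (Fin n × Fin n)).card = n * n := by
      rw [Finset.card_product]; simp
    rw [← hs] at htot
    omega
  have himgcard := Finset.card_le_card himg
  omega

end ZeroSum

lemma zero_mem_lpecc (n t : ℕ) :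
    0 ∈ {b : ℕ | ∃ P : Fin b → Finset (Finset (Fin n)), IsLPECC n t 3 1 Finset.univ P} := by
  refine ⟨fun i => i.elim0, by simp, fun i => i.elim0, fun i => i.elim0,
    fun T _ _ i => i.elim0, fun i => i.elim0, fun i => i.elim0⟩

lemma bdd_lpecc {n t : ℕ} (htn : t ≤ n) :
    BddAbove {b : ℕ | ∃ P : Fin b → Finset (Finset (Fin n)), IsLPECC n t 3 1 Finset.univ P} := by
  refine ⟨n * n + 6 * n + 6 * (t + 1), fun b hb => ?_⟩
  obtain ⟨P, hP⟩ := hb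
  have h1 := code_upper htn P hP
  have h2 : b ≤ 6 * (t + 1) * b := Nat.le_mul_of_pos_left b (by omega)
  omega

lemma cmax_upper {n t : ℕ} (htn : t ≤ n) :
    6 * (t + 1) * Cmax n t 3 1 ≤ n * n + 6 * n + 6 * (t + 1) := by
  obtain ⟨P, hP⟩ := Nat.sSup_mem ⟨0, zero_mem_lpecc n t⟩ (bdd_lpecc htn)
  exact code_upper htn P hP

lemma cmax_lower {n t : ℕ} (htn : t ≤ n) (hn : n ≠ 0) :
    n * n ≤ 6 * (t + 1) * Cmax n t 3 1 + 18 * t * n + 3 * n := by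
  haveI : NeZero n := ⟨hn⟩
  obtain ⟨k, G, hG1, hG2, hG3, hG4, hG5⟩ := greedy t n (zsT n).card (zsT n) le_rfl
    (zsT_degree n) (zsT_card3 n)
  -- the groups form an LPECC code
  have hk : k ∈ {b : ℕ | ∃ P : Fin b → Finset (Finset (Fin n)),
      IsLPECC n t 3 1 Finset.univ P} := by
    refine ⟨G, by simp, fun i B _ => Finset.subset_univ B, hG4, ?_, ?_, ?_⟩
    · -- Property A
      intro T _ hT i
      by_contra hcon
      push_neg at hcon
      have hmaps : ∀ B ∈ G i, (fun B => if h : (B ∩ T).Nonempty then (B ∩ T).min' h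
          else ⟨0, Nat.pos_of_ne_zero hn⟩) B ∈ T := by
        intro B hB
        have hnd : ¬ Disjoint B T := fun h => hcon B hB h
        have hne : (B ∩ T).Nonempty := by
          obtain ⟨a, ha1, ha2⟩ := Finset.not_disjoint_iff.mp hnd
          exact ⟨a, Finset.mem_inter.mpr ⟨ha1, ha2⟩⟩
        simp only [dif_pos hne]
        exact (Finset.mem_inter.mp ((B ∩ T).min'_mem hne)).2
      have hlt : T.card < (G i).card := by rw [hT, hG2 i]; omega
      obtain ⟨B, hB, B', hB', hne, heq⟩ :=
        Finset.exists_ne_map_eq_of_card_lt_of_maps_to hlt hmaps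
      have hBd : ¬ Disjoint B T := fun h => hcon B hB h
      have hB'd : ¬ Disjoint B' T := fun h => hcon B' hB' h
      have hne1 : (B ∩ T).Nonempty := by
        obtain ⟨a, ha1, ha2⟩ := Finset.not_disjoint_iff.mp hBd
        exact ⟨a, Finset.mem_inter.mpr ⟨ha1, ha2⟩⟩
      have hne2 : (B' ∩ T).Nonempty := by
        obtain ⟨a, ha1, ha2⟩ := Finset.not_disjoint_iff.mp hB'd
        exact ⟨a, Finset.mem_inter.mpr ⟨ha1, ha2⟩⟩
      simp only [dif_pos hne1, dif_pos hne2] at heq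
      have hx1 := (B ∩ T).min'_mem hne1
      have hx2 := (B' ∩ T).min'_mem hne2
      rw [heq] at hx1
      exact Finset.disjoint_left.mp (hG3 i B hB B' hB' hne)
        (Finset.mem_inter.mp hx1).1 (Finset.mem_inter.mp hx2).1
    · -- Property B
      intro i B hB
      rw [zsT_card3 n B (hG1 i hB)]
    · -- Property C
      intro i j hij B hB B' hB'
      have hBz := hG1 i hB
      have hB'z := hG1 j hB'
      have hBB' : B ≠ B' := by
        intro h
        exact Finset.disjoint_left.mp (hG4 i j hij) hB (h ▸ hB')
      have hint := zsT_inter n hBz hB'z hBB'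
      have h3 : B.card = 3 := zsT_card3 n B hBz
      have h3' : B'.card = 3 := zsT_card3 n B' hB'z
      have hsd : (symmDiff B B').card = (B ∪ B').card - (B ∩ B').card := by
        rw [symmDiff_eq_sup_sdiff_inf]
        simp only [Finset.sup_eq_union, Finset.inf_eq_inter]
        exact Finset.card_sdiff_of_subset (Finset.inter_subset_union)
      have hui := Finset.card_union_add_card_inter B B'
      omega
  have hle : k ≤ Cmax n t 3 1 := le_csSup (bdd_lpecc htn) hk
  have hcnt := zsT_count n
  have h6 : 6 * (t + 1) * k ≤ 6 * (t + 1) * Cmax n t 3 1 := Nat.mul_le_mul_left _ hle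
  have h7 : 6 * (zsT n).card ≤ 6 * ((t + 1) * k + 3 * t * n) := Nat.mul_le_mul_left _ hG5
  have h8 : 6 * ((t + 1) * k + 3 * t * n) = 6 * (t + 1) * k + 18 * t * n := by ring
  omega

theorem lpecc_w3_e1_asymptotics (t : ℕ) (ht : 1 ≤ t) :
    Filter.Tendsto (fun n : ℕ => (Cmax n t 3 1 : ℝ) / (n : ℝ) ^ 2)
      Filter.atTop (nhds (1 / (6 * (t + 1)))) := by
  rw [← tendsto_sub_nhds_zero_iff]
  apply squeeze_zero_norm' (a := fun n : ℕ => (4 : ℝ) / n)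
    _ (tendsto_const_div_atTop_nhds_zero_nat 4)
  filter_upwards [Filter.eventually_ge_atTop (t + 1)] with n hn
  have htn : t ≤ n := by omega
  have hn0 : n ≠ 0 := by omega
  have hU := cmax_upper (n := n) (t := t) htn
  have hL := cmax_lower (n := n) (t := t) htn hn0
  set C := (Cmax n t 3 1 : ℝ) with hC
  have hUr : 6 * ((t : ℝ) + 1) * C ≤ (n : ℝ) * n + 6 * n + 6 * ((t : ℝ) + 1) := by
    rw [hC]
    exact_mod_cast hU
  have hLr : (n : ℝ) * n ≤ 6 * ((t : ℝ) + 1) * C + 18 * t * n + 3 * n := by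
    rw [hC]
    exact_mod_cast hL
  have hNn : ((t : ℝ) + 1) ≤ (n : ℝ) := by exact_mod_cast hn
  have hNpos : (0 : ℝ) < n := by exact_mod_cast Nat.pos_of_ne_zero hn0
  have hApos : (0 : ℝ) < 6 * ((t : ℝ) + 1) := by positivity
  have hN2 : (0 : ℝ) < (n : ℝ) ^ 2 := by positivity
  have htr : (1 : ℝ) ≤ (t : ℝ) := by exact_mod_cast ht
  have hN2' : (2 : ℝ) ≤ (n : ℝ) := by linarith
  rw [Real.norm_eq_abs, abs_le]
  constructor
  · -- lower bound
    rw [neg_le, neg_sub, sub_le_iff_le_add, div_add_div _ _ hNpos.ne' hN2.ne',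
      div_le_div_iff₀ hApos (by positivity : (0:ℝ) < (n:ℝ) * (n:ℝ)^2)]
    have h1 := mul_le_mul_of_nonneg_right hLr hNpos.le
    nlinarith [h1, mul_nonneg (mul_nonneg (le_trans zero_le_one htr) hNpos.le) hNpos.le, sq_nonneg ((n:ℝ)),
      mul_nonneg (sub_nonneg.mpr htr) (mul_nonneg hNpos.le hNpos.le)]
  · rw [sub_le_iff_le_add, div_add_div _ _ hNpos.ne' hApos.ne',
      div_le_div_iff₀ hN2 (by positivity : (0:ℝ) < (n:ℝ) * (6 * ((t:ℝ)+1)))]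
    have h2 := mul_le_mul_of_nonneg_right hUr hNpos.le
    nlinarith [h2, mul_nonneg (sub_nonneg.mpr htr) (mul_nonneg hNpos.le hNpos.le),
      mul_nonneg (sub_nonneg.mpr hN2') (mul_nonneg hNpos.le hNpos.le),
      mul_nonneg (sub_nonneg.mpr hNn) hNpos.le]
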